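/- Let g be a continuously differentiable function on a compact interval [α, β] (k times continuously differentiable for a given k ∈ ℕ). Then there exists a sequence (f_n) of polynomials such that for every j = 0, …, k, the j-th derivatives f_n^{(j)} converge uniformly on [α, β] to g^{(j)}. -/

import Mathlib

open Polynomial Set Filter

noncomputable def polyAntideriv (p : ℝ[X]) : ℝ[X] :=
  p.sum fun n a => C (a / (n + 1)) * X ^ (n + 1)

lemma derivative_polyAntideriv (p : ℝ[X]) : (polyAntideriv p).derivative = p := by
  unfold polyAntideriv
  rw [Polynomial.sum, map_sum]
  conv_rhs => rw [← Polynomial.sum_C_mul_X_pow_eq p, Polynomial.sum]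
  refine Finset.sum_congr rfl fun n _ => ?_
  rw [derivative_C_mul, derivative_X_pow]
  push_cast
  rw [← mul_assoc, ← map_mul, div_mul_cancel₀]
  positivity

/-- Simultaneous uniform polynomial approximation of a `C^k` function and its derivatives
up to order `k` on a compact interval. -/
theorem stmt_4 {α β : ℝ} (hαβ : α < β) (k : ℕ) (g : ℝ → ℝ)
    (hg : ContDiffOn ℝ k g (Set.Icc α β)) :
    ∃ f : ℕ → Polynomial ℝ, ∀ j ≤ k,
      TendstoUniformlyOn (fun n x => (Polynomial.derivative^[j] (f n)).eval x)
        (iteratedDerivWithin j g (Set.Icc α β)) Filter.atTop (Set.Icc α β) := by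
  have hs : UniqueDiffOn ℝ (Set.Icc α β) := uniqueDiffOn_Icc hαβ
  induction k generalizing g with
  | zero =>
    have hc : ContinuousOn g (Set.Icc α β) := hg.continuousOn
    choose p hp using fun n : ℕ =>
      exists_polynomial_near_of_continuousOn α β g hc (1 / (n + 1)) (by positivity)
    refine ⟨p, ?_⟩
    intro j hj
    obtain rfl : j = 0 := Nat.le_zero.mp hj
    simp only [Function.iterate_zero, id, iteratedDerivWithin_zero]
    rw [Metric.tendstoUniformlyOn_iff]
    intro ε hε
    obtain ⟨N, hN⟩ := exists_nat_one_div_lt hε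
    filter_upwards [eventually_ge_atTop N] with n hn x hx
    have h1 : (1 : ℝ) / (n + 1) ≤ 1 / (N + 1) := by
      apply one_div_le_one_div_of_le (by positivity)
      exact_mod_cast Nat.succ_le_succ hn
    calc dist (g x) ((p n).eval x) = |(p n).eval x - g x| := by
          rw [dist_comm, Real.dist_eq]
      _ < 1 / (n + 1) := hp n x hx
      _ ≤ 1 / (N + 1) := h1
      _ < ε := hN
  | succ k ih =>
    set s := Set.Icc α β with hsdef
    set g' := derivWithin g s with hg'def
    have hg'c : ContDiffOn ℝ k g' s := hg.derivWithin hs (by exact_mod_cast le_refl (k + 1))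
    obtain ⟨q, hq⟩ := ih g' hg'c
    set f : ℕ → ℝ[X] := fun n =>
      polyAntideriv (q n) + C (g α - (polyAntideriv (q n)).eval α) with hfdef
    have hdf : ∀ n, (f n).derivative = q n := by
      intro n
      simp [hfdef, derivative_polyAntideriv]
    have hfα : ∀ n, (f n).eval α = g α := by intro n; simp [hfdef]
    have hαs : α ∈ s := Set.left_mem_Icc.mpr hαβ.le
    have hgd : DifferentiableOn ℝ g s :=
      hg.differentiableOn (by simp)
    refine ⟨f, ?_⟩
    intro j hj
    cases j with
    | succ j =>
      have hj' : j ≤ k := Nat.succ_le_succ_iff.mp hj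
      have := hq j hj'
      have hF : ∀ n, Set.EqOn (fun x => ((derivative^[j]) (q n)).eval x)
          (fun x => ((derivative^[j + 1]) (f n)).eval x) s := by
        intro n x _
        rw [Function.iterate_succ_apply, hdf]
      refine (this.congr (Filter.Eventually.of_forall hF)).congr_right ?_
      intro x hx
      rw [iteratedDerivWithin_succ']
    | zero =>
      simp only [Function.iterate_zero, id, iteratedDerivWithin_zero]
      rw [Metric.tendstoUniformlyOn_iff]
      intro ε hε
      have hβα : (0:ℝ) < β - α := sub_pos.mpr hαβ
      have hCpos : 0 < ε / (2 * (β - α)) := by positivity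
      have h0 := hq 0 (Nat.zero_le k)
      rw [Metric.tendstoUniformlyOn_iff] at h0
      filter_upwards [h0 (ε / (2 * (β - α))) hCpos] with n hn x hx
      -- h n y := (f n).eval y - g y vanishes at α, has small derivative on s
      have hdiff : DifferentiableOn ℝ (fun y => (f n).eval y - g y) s :=
        fun y hy => ((f n).differentiableAt.differentiableWithinAt).sub (hgd y hy)
      have hderiv : ∀ y ∈ s, derivWithin (fun y => (f n).eval y - g y) s y
          = (q n).eval y - g' y := by
        intro y hy
        have h1 : HasDerivWithinAt (fun y => (f n).eval y - g y)
            ((q n).eval y - g' y) s y := by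
          have := ((f n).hasDerivAt y).hasDerivWithinAt.sub
            ((hgd y hy).hasDerivWithinAt)
          rwa [hdf n] at this
        exact h1.derivWithin (hs y hy)
      have hbound : ∀ y ∈ s, ‖derivWithin (fun y => (f n).eval y - g y) s y‖
          ≤ ε / (2 * (β - α)) := by
        intro y hy
        rw [hderiv y hy]
        have := hn y hy
        rw [iteratedDerivWithin_zero, Real.dist_eq] at this
        rw [Real.norm_eq_abs, abs_sub_comm]
        exact this.le
      have key := (convex_Icc α β).norm_image_sub_le_of_norm_derivWithin_le hdiff hbound
        hαs hx
      rw [hfα n] at key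
      have hxα : ‖x - α‖ ≤ β - α := by
        rw [Real.norm_eq_abs, abs_of_nonneg (sub_nonneg.mpr hx.1)]
        linarith [hx.2]
      calc dist (g x) ((f n).eval x) = ‖(f n).eval x - g x - (g α - g α)‖ := by
            rw [dist_comm, Real.dist_eq, sub_self, sub_zero, Real.norm_eq_abs]
        _ ≤ ε / (2 * (β - α)) * ‖x - α‖ := key
        _ ≤ ε / (2 * (β - α)) * (β - α) := by
            apply mul_le_mul_of_nonneg_left hxα hCpos.le
        _ < ε := by
            rw [div_mul_eq_mul_div, mul_comm (2:ℝ), ← div_div,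
              mul_div_assoc, div_self hβα.ne']
            linarith
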